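/- For every τ in the upper half-plane ℍ: θ[0;0](0,τ)·θ[0;1](0,τ)·θ[1;0](0,τ)²·θ[1;1/2](0,τ)² = 4·θ[0;0](0,4τ)·θ[1;0](0,4τ)·θ[0;1](0,4τ)²·( θ[0;0](0,4τ)² - θ[1;0](0,4τ)² ). -/

import Mathlib

open Complex

/-- The theta function with characteristics `θ[ε; ε'](ζ, τ)`. -/
noncomputable def thetaChar (e e' : ℝ) (z τ : ℂ) : ℂ :=
  ∑' n : ℤ, Complex.exp (2 * Real.pi * I *
    ((1/2) * ((n : ℂ) + (e : ℂ)/2)^2 * τ + ((n : ℂ) + (e : ℂ)/2) * (z + (e' : ℂ)/2)))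

/-- The derivative theta constant `θ'[ε; ε'](0, τ) = ∂θ[ε;ε'](ζ,τ)/∂ζ |_{ζ=0}`. -/
noncomputable def thetaCharDeriv (e e' : ℝ) (τ : ℂ) : ℂ :=
  deriv (fun z => thetaChar e e' z τ) 0

noncomputable def ff (t : ℂ) (a b : ℝ) (n : ℤ) : ℂ :=
  Complex.exp (Real.pi * I * (t * ((n : ℂ) + (a : ℂ)) ^ 2 + 2 * ((n : ℂ) + (a : ℂ)) * (b : ℂ)))

noncomputable def Sf (t : ℂ) (a b : ℝ) : ℂ := ∑' n : ℤ, ff t a b n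

lemma ff_eq (t : ℂ) (a b : ℝ) (n : ℤ) :
    ff t a b n = Complex.exp (Real.pi * I * t * (a:ℂ)^2 + 2 * Real.pi * I * (a:ℂ) * (b:ℂ)) *
      jacobiTheta₂_term n ((a : ℂ) * t + (b : ℂ)) t := by
  unfold ff jacobiTheta₂_term
  rw [← Complex.exp_add]
  congr 1
  ring

lemma summable_ff (t : ℂ) (ht : 0 < t.im) (a b : ℝ) : Summable (ff t a b) := by
  have h := ((summable_jacobiTheta₂_term_iff ((a : ℂ) * t + (b : ℂ)) t).mpr ht).mul_left
    (Complex.exp (Real.pi * I * t * (a:ℂ)^2 + 2 * Real.pi * I * (a:ℂ) * (b:ℂ)))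
  exact h.congr fun n => (ff_eq t a b n).symm

lemma summable_norm_ff (t : ℂ) (ht : 0 < t.im) (a b : ℝ) :
    Summable fun n => ‖ff t a b n‖ :=
  summable_norm_iff.mpr (summable_ff t ht a b)

def splitE : (Σ _ : Bool, ℤ × ℤ) ≃ ℤ × ℤ where
  toFun := fun x => match x with
    | ⟨false, p⟩ => (p.1 + p.2, p.1 - p.2)
    | ⟨true, p⟩ => (p.1 + p.2 + 1, p.1 - p.2)
  invFun := fun q =>
    if (q.1 - q.2) % 2 = 0 then ⟨false, ((q.1 + q.2) / 2, (q.1 - q.2) / 2)⟩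
    else ⟨true, ((q.1 + q.2 - 1) / 2, (q.1 - q.2 - 1) / 2)⟩
  left_inv := by
    rintro ⟨b, j, k⟩
    cases b <;> dsimp only
    · rw [if_pos (by omega)]
      have h1 : (j + k + (j - k)) / 2 = j := by omega
      have h2 : (j + k - (j - k)) / 2 = k := by omega
      rw [h1, h2]
    · rw [if_neg (by omega)]
      have h1 : (j + k + 1 + (j - k) - 1) / 2 = j := by omega
      have h2 : (j + k + 1 - (j - k) - 1) / 2 = k := by omega
      rw [h1, h2]
  right_inv := by
    rintro ⟨m, n⟩
    dsimp only
    by_cases h : (m - n) % 2 = 0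
    · rw [if_pos h]
      have h1 : (m + n) / 2 + (m - n) / 2 = m := by omega
      have h2 : (m + n) / 2 - (m - n) / 2 = n := by omega
      show ((m + n) / 2 + (m - n) / 2, (m + n) / 2 - (m - n) / 2) = (m, n)
      rw [h1, h2]
    · rw [if_neg h]
      have h1 : (m + n - 1) / 2 + (m - n - 1) / 2 + 1 = m := by omega
      have h2 : (m + n - 1) / 2 - (m - n - 1) / 2 = n := by omega
      show ((m + n - 1) / 2 + (m - n - 1) / 2 + 1, (m + n - 1) / 2 - (m - n - 1) / 2) = (m, n)
      rw [h1, h2]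

lemma tsum_split (F : ℤ × ℤ → ℂ) (hF : Summable F) :
    ∑' p, F p = (∑' p : ℤ × ℤ, F (p.1 + p.2, p.1 - p.2)) +
      (∑' p : ℤ × ℤ, F (p.1 + p.2 + 1, p.1 - p.2)) := by
  have hs : Summable fun c : (Σ _ : Bool, ℤ × ℤ) => F (splitE c) := splitE.summable_iff.mpr hF
  rw [← splitE.tsum_eq F, hs.tsum_sigma, tsum_bool]
  rfl

lemma ff_mul_ff0 (t : ℂ) (a b a' b' : ℝ) (j k : ℤ) :
    ff t a b (j + k) * ff t a' b' (j - k) =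
      ff (2 * t) ((a + a') / 2) (b + b') j * ff (2 * t) ((a - a') / 2) (b - b') k := by
  unfold ff
  rw [← Complex.exp_add, ← Complex.exp_add]
  congr 1
  push_cast
  ring

lemma ff_mul_ff1 (t : ℂ) (a b a' b' : ℝ) (j k : ℤ) :
    ff t a b (j + k + 1) * ff t a' b' (j - k) =
      ff (2 * t) ((1 + a + a') / 2) (b + b') j * ff (2 * t) ((1 + a - a') / 2) (b - b') k := by
  unfold ff
  rw [← Complex.exp_add, ← Complex.exp_add]
  congr 1
  push_cast
  ring

lemma Sf_mul (t : ℂ) (ht : 0 < t.im) (a b a' b' : ℝ) :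
    Sf t a b * Sf t a' b' =
      Sf (2 * t) ((a + a') / 2) (b + b') * Sf (2 * t) ((a - a') / 2) (b - b') +
      Sf (2 * t) ((1 + a + a') / 2) (b + b') * Sf (2 * t) ((1 + a - a') / 2) (b - b') := by
  have h2t : 0 < (2 * t).im := by
    have : (2 * t).im = 2 * t.im := by simp
    rw [this]; linarith
  have H1 := summable_norm_ff t ht a b
  have H2 := summable_norm_ff t ht a' b'
  rw [Sf, Sf, tsum_mul_tsum_of_summable_norm H1 H2,
    tsum_split _ (summable_mul_of_summable_norm H1 H2)]
  congr 1
  · calc (∑' p : ℤ × ℤ, ff t a b (p.1 + p.2) * ff t a' b' (p.1 - p.2))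
        = ∑' p : ℤ × ℤ, ff (2 * t) ((a + a') / 2) (b + b') p.1 *
            ff (2 * t) ((a - a') / 2) (b - b') p.2 :=
          tsum_congr fun p => ff_mul_ff0 t a b a' b' p.1 p.2
      _ = Sf (2 * t) ((a + a') / 2) (b + b') * Sf (2 * t) ((a - a') / 2) (b - b') :=
          (tsum_mul_tsum_of_summable_norm (summable_norm_ff _ h2t _ _)
            (summable_norm_ff _ h2t _ _)).symm
  · calc (∑' p : ℤ × ℤ, ff t a b (p.1 + p.2 + 1) * ff t a' b' (p.1 - p.2))
        = ∑' p : ℤ × ℤ, ff (2 * t) ((1 + a + a') / 2) (b + b') p.1 *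
            ff (2 * t) ((1 + a - a') / 2) (b - b') p.2 :=
          tsum_congr fun p => ff_mul_ff1 t a b a' b' p.1 p.2
      _ = Sf (2 * t) ((1 + a + a') / 2) (b + b') * Sf (2 * t) ((1 + a - a') / 2) (b - b') :=
          (tsum_mul_tsum_of_summable_norm (summable_norm_ff _ h2t _ _)
            (summable_norm_ff _ h2t _ _)).symm

lemma Sf_a_add_one (t : ℂ) (a b : ℝ) : Sf t (a + 1) b = Sf t a b := by
  have key : ∀ n : ℤ, ff t (a + 1) b n = ff t a b (n + 1) := by
    intro n; unfold ff; congr 1; push_cast; ring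
  calc Sf t (a + 1) b = ∑' n : ℤ, ff t a b (n + 1) := tsum_congr key
    _ = Sf t a b := (Equiv.addRight (1 : ℤ)).tsum_eq (ff t a b)

lemma Sf_b_add_one (t : ℂ) (a b : ℝ) :
    Sf t a (b + 1) = Complex.exp (2 * Real.pi * I * (a : ℂ)) * Sf t a b := by
  rw [Sf, Sf, ← tsum_mul_left]
  refine tsum_congr fun n => ?_
  have key : ff t a (b + 1) n =
      Complex.exp ((n : ℂ) * (2 * Real.pi * I)) *
        (Complex.exp (2 * Real.pi * I * (a : ℂ)) * ff t a b n) := by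
    unfold ff
    rw [← Complex.exp_add, ← Complex.exp_add]
    congr 1
    push_cast
    ring
  rw [key, Complex.exp_int_mul_two_pi_mul_I, one_mul]

def negE : ℤ ≃ ℤ :=
  ⟨fun n => -1 - n, fun n => -1 - n, fun n => by show -1 - (-1 - n) = n; omega,
    fun n => by show -1 - (-1 - n) = n; omega⟩

lemma Sf_half_half (t : ℂ) : Sf t (1/2) (1/2) = 0 := by
  have key : ∀ n : ℤ, ff t (1/2) (1/2) (negE n) = - ff t (1/2) (1/2) n := by
    intro n
    show ff t (1/2) (1/2) (-1 - n) = - ff t (1/2) (1/2) n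
    have h1 : ff t (1/2) (1/2) (-1 - n) =
        Complex.exp (((-1 - n : ℤ) : ℂ) * (2 * Real.pi * I)) *
          (Complex.exp ((Real.pi : ℂ) * I) * ff t (1/2) (1/2) n) := by
      unfold ff
      rw [← Complex.exp_add, ← Complex.exp_add]
      congr 1
      push_cast
      ring
    rw [h1, Complex.exp_int_mul_two_pi_mul_I, one_mul, Complex.exp_pi_mul_I, neg_one_mul]
  have h2 : ∑' n : ℤ, ff t (1/2) (1/2) (negE n) = ∑' n : ℤ, ff t (1/2) (1/2) n :=
    negE.tsum_eq (ff t (1/2) (1/2))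
  have h3 : ∑' n : ℤ, ff t (1/2) (1/2) (negE n) = - Sf t (1/2) (1/2) := by
    rw [show (fun n : ℤ => ff t (1/2) (1/2) (negE n)) = fun n : ℤ => - ff t (1/2) (1/2) n from
      funext fun n => key n, tsum_neg, Sf]
  have h4 : Sf t (1/2) (1/2) = - Sf t (1/2) (1/2) := h2.symm.trans h3
  linear_combination h4 / 2

lemma Sf_neg_half (t : ℂ) : Sf t 0 (-(1/2)) = Sf t 0 (1/2) := by
  have h := Sf_b_add_one t 0 (-(1/2))
  norm_num at h
  exact h.symm

lemma Sf_zero_one (t : ℂ) : Sf t 0 1 = Sf t 0 0 := by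
  have h := Sf_b_add_one t 0 0
  norm_num at h
  exact h

lemma Sf_half_one (t : ℂ) : Sf t (1/2) 1 = - Sf t (1/2) 0 := by
  have h := Sf_b_add_one t (1/2) 0
  have hexp : Complex.exp (2 * Real.pi * I * (((1:ℝ)/2 : ℝ) : ℂ)) = -1 := by
    rw [show (2 * (Real.pi:ℂ) * I * (((1:ℝ)/2 : ℝ) : ℂ)) = Real.pi * I by push_cast; ring,
      Complex.exp_pi_mul_I]
  rw [hexp] at h
  norm_num at h
  exact h

lemma Sf_one_b (t : ℂ) (b : ℝ) : Sf t 1 b = Sf t 0 b := by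
  have h := Sf_a_add_one t 0 b
  norm_num at h
  exact h

lemma idA (t : ℂ) (ht : 0 < t.im) :
    Sf t 0 0 * Sf t 0 (1/2) = Sf (2*t) 0 (1/2) ^ 2 := by
  have h := Sf_mul t ht 0 0 0 (1/2)
  norm_num at h
  rw [Sf_half_half, zero_mul, add_zero, Sf_neg_half] at h
  rw [h]; ring

lemma idB (t : ℂ) (ht : 0 < t.im) :
    Sf t (1/2) 0 * Sf t (1/2) 0 = 2 * (Sf (2*t) (1/2) 0 * Sf (2*t) 0 0) := by
  have h := Sf_mul t ht (1/2) 0 (1/2) 0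
  norm_num at h
  rw [Sf_one_b] at h
  rw [h]; ring

lemma idC (t : ℂ) (ht : 0 < t.im) :
    Sf t 0 (1/2) * Sf t 0 (1/2) = Sf (2*t) 0 0 ^ 2 - Sf (2*t) (1/2) 0 ^ 2 := by
  have h := Sf_mul t ht 0 (1/2) 0 (1/2)
  norm_num at h
  rw [Sf_zero_one, Sf_half_one] at h
  rw [h]; ring

lemma idD (t : ℂ) (ht : 0 < t.im) :
    Sf t (1/2) (1/4) * Sf t (1/2) (1/4) = Sf (2*t) 0 (1/2) * Sf (2*t) (1/2) 0 := by
  have h := Sf_mul t ht (1/2) (1/4) (1/2) (1/4)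
  norm_num at h
  rw [Sf_half_half, zero_mul, zero_add, Sf_one_b] at h
  exact h


lemma theta_eq (e e' : ℝ) (τ : ℂ) : thetaChar e e' 0 τ = Sf τ (e/2) (e'/2) := by
  unfold thetaChar Sf ff
  refine tsum_congr fun n => ?_
  congr 1
  push_cast
  ring

theorem theta_product_identity (τ : ℂ) (hτ : 0 < τ.im) :
    thetaChar 0 0 0 τ * thetaChar 0 1 0 τ *
      thetaChar 1 0 0 τ ^ 2 * thetaChar 1 (1/2) 0 τ ^ 2 =
    4 * thetaChar 0 0 0 (4*τ) * thetaChar 1 0 0 (4*τ) * thetaChar 0 1 0 (4*τ) ^ 2 *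
      (thetaChar 0 0 0 (4*τ) ^ 2 - thetaChar 1 0 0 (4*τ) ^ 2) := by
  have h2im : 0 < (2*τ).im := by
    have h : (2*τ).im = 2 * τ.im := by simp
    rw [h]; linarith
  have e24 : (2:ℂ) * (2*τ) = 4*τ := by ring
  have hA1 := idA τ hτ
  have hB1 := idB τ hτ
  have hD := idD τ hτ
  have hA2 := idA (2*τ) h2im; rw [e24] at hA2
  have hB2 := idB (2*τ) h2im; rw [e24] at hB2
  have hC2 := idC (2*τ) h2im; rw [e24] at hC2
  have t1 : thetaChar 0 0 0 τ = Sf τ 0 0 := by rw [theta_eq]; norm_num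
  have t2 : thetaChar 0 1 0 τ = Sf τ 0 (1/2) := by rw [theta_eq]; norm_num
  have t3 : thetaChar 1 0 0 τ = Sf τ (1/2) 0 := by rw [theta_eq]; norm_num
  have t4 : thetaChar 1 (1/2) 0 τ = Sf τ (1/2) (1/4) := by rw [theta_eq]; norm_num
  have t5 : thetaChar 0 0 0 (4*τ) = Sf (4*τ) 0 0 := by rw [theta_eq]; norm_num
  have t6 : thetaChar 1 0 0 (4*τ) = Sf (4*τ) (1/2) 0 := by rw [theta_eq]; norm_num
  have t7 : thetaChar 0 1 0 (4*τ) = Sf (4*τ) 0 (1/2) := by rw [theta_eq]; norm_num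
  rw [t1, t2, t3, t4, t5, t6, t7]
  linear_combination (Sf τ (1/2) 0 ^ 2 * Sf τ (1/2) (1/4) ^ 2) * hA1 +
    (Sf (2*τ) 0 (1/2) ^ 2 * Sf τ (1/2) (1/4) ^ 2) * hB1 +
    (2 * Sf (2*τ) (1/2) 0 * Sf (2*τ) 0 0 * Sf (2*τ) 0 (1/2) ^ 2) * hD +
    (2 * Sf (2*τ) 0 0 * Sf (2*τ) 0 (1/2) ^ 3) * hB2 +
    (4 * Sf (4*τ) (1/2) 0 * Sf (4*τ) 0 0 * Sf (2*τ) 0 (1/2) ^ 2) * hA2 +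
    (4 * Sf (4*τ) (1/2) 0 * Sf (4*τ) 0 0 * Sf (4*τ) 0 (1/2) ^ 2) * hC2
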